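/- arXiv:2401.12833 — 2 statements merged into one kernel-verified Lean document; each statement's English description precedes it below -/
import Mathlib

section
/- (Relation 4) Define X : V → R by X(k) = e^{e_n − e_{n+1} − 2h(k)} for all k ∈ V. Then for every v ∈ V one has M_v · M_{v̄} = X as functions V → R (pointwise product); in particular M_v · M_{v̄} = M_w · M_{w̄} for all v, w ∈ V. -/
noncomputable section

/-- Standard basis vector `e_k` of `ℤ^{n+1}` (1-indexed), with `e 0 = 0`. -/
def ee (n k : ℕ) : Fin (n+1) → ℤ := fun t => if (t : ℕ) + 1 = k then 1 else 0

/-- The function `h : V → ℤ^{n+1}`. -/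
def hh (n j : ℕ) : Fin (n+1) → ℤ :=
  if j ≤ n+2 then ee n (j-1) - ee n (n+1) else ee n n - ee n (2*n+2-j)

/-- The Laurent polynomial ring `R = ℤ[y₁^{±1},…,y_{n+1}^{±1}]`. -/
abbrev Rg (n : ℕ) : Type := AddMonoidAlgebra ℤ (Fin (n+1) → ℤ)

/-- The monomial `e^w`. -/
def ex (n : ℕ) (w : Fin (n+1) → ℤ) : Rg n := AddMonoidAlgebra.single w 1

/-- `ī = 2n+3-i`. -/
def bar (n i : ℕ) : ℕ := 2*n+3 - i

/-- Membership in the vertex set `V = {1,…,2n+2}`. -/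
def memV (n i : ℕ) : Prop := 1 ≤ i ∧ i ≤ 2*n+2

/-- The axial function `α(i,j) = h(j) - h(i)`. -/
def axl (n i j : ℕ) : Fin (n+1) → ℤ := hh n j - hh n i

/-- The K-class `M_v`. -/
def Mv (n v : ℕ) (l : ℕ) : Rg n :=
  if l = v then 1
  else if l = bar n v then ex n (ee n n - ee n (n+1) - (2:ℤ) • hh n (bar n v))
  else ex n (hh n v - hh n l)

/-- The pointwise inverse `M_v⁻¹`. -/
def MvInv (n v : ℕ) (l : ℕ) : Rg n :=
  if l = v then 1
  else if l = bar n v then ex n (-(ee n n - ee n (n+1) - (2:ℤ) • hh n (bar n v)))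
  else ex n (hh n l - hh n v)

/-- A subset `P ⊆ V` is admissible if it is nonempty and contains no pair `{i, ī}`. -/
def admissible (n : ℕ) (P : Finset ℕ) : Prop :=
  P.Nonempty ∧ (∀ i ∈ P, memV n i) ∧ (∀ i ∈ P, bar n i ∉ P)

/-- The vertex set as a finset. -/
def Vfin (n : ℕ) : Finset ℕ := Finset.Icc 1 (2*n+2)

/-- The Thom class `Δ_P`. -/
def Dl (n : ℕ) (P : Finset ℕ) (l : ℕ) : Rg n :=
  if l ∈ P then
    ∏ k ∈ (Vfin n).filter (fun k => k ∉ P ∧ k ≠ bar n l), (1 - ex n (axl n l k))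
  else 0

/-- `φ : V → R` is a K-class if `1 - e^{α(i,j)}` divides `φ(i) - φ(j)` for every edge `(i,j)`. -/
def isKClass (n : ℕ) (f : ℕ → Rg n) : Prop :=
  ∀ i j : ℕ, memV n i → memV n j → j ≠ i → j ≠ bar n i →
    (1 - ex n (axl n i j)) ∣ (f i - f j)


lemma bar_bar (n v : ℕ) (hv : memV n v) : bar n (bar n v) = v := by
  unfold bar memV at *; omega

lemma ne_bar_self (n v : ℕ) : v ≠ bar n v := by
  unfold bar; omega

lemma ex_mul (n : ℕ) (a b : Fin (n+1) → ℤ) : ex n a * ex n b = ex n (a + b) := by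
  simp [ex, AddMonoidAlgebra.single_mul_single]

lemma hsum (n v : ℕ) (hv : memV n v) :
    hh n v + hh n (bar n v) = ee n n - ee n (n+1) := by
  obtain ⟨h1, h2⟩ := hv
  simp only [hh, bar]
  split_ifs <;> simp only [*, if_true, if_false] <;>
    (funext t; have ht := t.isLt;
     simp only [ee, Pi.add_apply, Pi.sub_apply]; split_ifs <;> omega)

/-- Relation 4: with `X(k) = e^{e_n - e_{n+1} - 2h(k)}`, one has
`M_v · M_{v̄} = X` as functions `V → R` for every `v ∈ V`; in particular
`M_v · M_{v̄} = M_w · M_{w̄}` for all `v, w ∈ V`. -/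
theorem relation4 (n : ℕ) (hn : 1 ≤ n) :
    (∀ v, memV n v → ∀ k, memV n k →
       Mv n v k * Mv n (bar n v) k = ex n (ee n n - ee n (n+1) - (2:ℤ) • hh n k)) ∧
    (∀ v w, memV n v → memV n w → ∀ k, memV n k →
       Mv n v k * Mv n (bar n v) k = Mv n w k * Mv n (bar n w) k) := by
  have main : ∀ v, memV n v → ∀ k, memV n k →
      Mv n v k * Mv n (bar n v) k = ex n (ee n n - ee n (n+1) - (2:ℤ) • hh n k) := by
    intro v hv k hk
    have hbb := bar_bar n v hv
    by_cases hkv : k = v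
    · subst hkv
      have h1 : Mv n k k = 1 := by simp [Mv]
      have h2 : Mv n (bar n k) k =
          ex n (ee n n - ee n (n+1) - (2:ℤ) • hh n (bar n (bar n k))) := by
        rw [Mv, if_neg (ne_bar_self n k), if_pos hbb.symm]
      rw [h1, h2, hbb, one_mul]
    · by_cases hkb : k = bar n v
      · subst hkb
        have h1 : Mv n v (bar n v) =
            ex n (ee n n - ee n (n+1) - (2:ℤ) • hh n (bar n v)) := by
          rw [Mv, if_neg (Ne.symm (ne_bar_self n v)), if_pos rfl]
        have h2 : Mv n (bar n v) (bar n v) = 1 := by simp [Mv]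
        rw [h1, h2, mul_one]
      · have hkbb : k ≠ bar n (bar n v) := by rw [hbb]; exact hkv
        have h1 : Mv n v k = ex n (hh n v - hh n k) := by
          rw [Mv, if_neg hkv, if_neg hkb]
        have h2 : Mv n (bar n v) k = ex n (hh n (bar n v) - hh n k) := by
          rw [Mv, if_neg hkb, if_neg hkbb]
        rw [h1, h2, ex_mul]
        congr 1
        have := hsum n v hv
        rw [← this]
        module
  exact ⟨main, fun v w hv hw k hk => by rw [main v hv k hk, main w hw k hk]⟩
end
end

section
/- Let S be the subring of the ring of functions V → R (pointwise operations) generated by the set {M_i : 2 ≤ i ≤ n+2} ∪ {M_i⁻¹ : 2 ≤ i ≤ n+2}. Then the evaluation map S → R, φ ↦ φ(1), is a ring isomorphism of S onto R. -/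
noncomputable section

/-- The vertex set `V = {1,…,2n+2}` as a type. -/
def Vt (n : ℕ) : Type := {i : ℕ // memV n i}

/-- `φ : V → R` is a K-class if `1 - e^{α(i,j)}` divides `φ(i) - φ(j)` for every edge. -/
def isKClassV (n : ℕ) (f : Vt n → Rg n) : Prop :=
  ∀ i j : Vt n, j.1 ≠ i.1 → j.1 ≠ bar n i.1 →
    (1 - ex n (axl n i.1 j.1)) ∣ (f i - f j)


/-! ### Auxiliary development -/

/-- Exponent vector of `M_{k+2}` at vertex `l`. -/
def cvec (n : ℕ) (k : Fin (n+1)) (l : ℕ) : Fin (n+1) → ℤ :=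
  if l = (k:ℕ)+2 then 0
  else if l = bar n ((k:ℕ)+2) then
    ee n n - ee n (n+1) - (2:ℤ) • hh n (bar n ((k:ℕ)+2))
  else hh n ((k:ℕ)+2) - hh n l

lemma ex_zero (n : ℕ) : ex n 0 = 1 := (AddMonoidAlgebra.one_def).symm

lemma Mv_eq_ex (n : ℕ) (k : Fin (n+1)) (l : ℕ) :
    Mv n ((k:ℕ)+2) l = ex n (cvec n k l) := by
  unfold Mv cvec
  split_ifs <;> simp [ex_zero]

lemma MvInv_eq_ex (n : ℕ) (k : Fin (n+1)) (l : ℕ) :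
    MvInv n ((k:ℕ)+2) l = ex n (-(cvec n k l)) := by
  unfold MvInv cvec
  split_ifs <;> simp [ex_zero, neg_sub]

/-- The linear map on exponents induced at vertex `l`. -/
def Amap (n : ℕ) (l : ℕ) (w : Fin (n+1) → ℤ) : Fin (n+1) → ℤ :=
  ∑ k, w k • cvec n k l

lemma Amap_zero (n l : ℕ) : Amap n l 0 = 0 := by simp [Amap]

lemma Amap_add (n l : ℕ) (w w' : Fin (n+1) → ℤ) :
    Amap n l (w + w') = Amap n l w + Amap n l w' := by
  simp [Amap, add_smul, Finset.sum_add_distrib]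

lemma Amap_single (n l : ℕ) (k : Fin (n+1)) :
    Amap n l (Pi.single k 1) = cvec n k l := by
  unfold Amap
  rw [Finset.sum_eq_single k]
  · simp
  · intro b _ hb; simp [Pi.single_apply, hb]
  · simp

lemma Amap_neg_single (n l : ℕ) (k : Fin (n+1)) :
    Amap n l (-(Pi.single k 1)) = -(cvec n k l) := by
  unfold Amap
  rw [Finset.sum_eq_single k]
  · simp
  · intro b _ hb; simp [Pi.single_apply, hb]
  · simp

lemma Fm_mul_aux (n : ℕ) (l : Vt n) (w w' : Multiplicative (Fin (n+1) → ℤ)) :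
    AddMonoidAlgebra.single (Amap n l.1 (w * w').toAdd) (1:ℤ) =
      AddMonoidAlgebra.single (Amap n l.1 w.toAdd) 1 *
        AddMonoidAlgebra.single (Amap n l.1 w'.toAdd) 1 := by
  rw [toAdd_mul, Amap_add, AddMonoidAlgebra.single_mul_single, mul_one]

lemma Fm_one_aux (n : ℕ) (l : Vt n) :
    AddMonoidAlgebra.single (Amap n l.1 ((1 : Multiplicative (Fin (n+1) → ℤ)).toAdd)) (1:ℤ)
      = 1 := by
  rw [toAdd_one, Amap_zero]; exact (AddMonoidAlgebra.one_def).symm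

/-- The monoid hom from exponents to the ring of functions. -/
def Fm (n : ℕ) : Multiplicative (Fin (n+1) → ℤ) →* (Vt n → Rg n) where
  toFun w := fun l => AddMonoidAlgebra.single (Amap n l.1 w.toAdd) 1
  map_one' := funext fun l => Fm_one_aux n l
  map_mul' := fun w w' => funext fun l => Fm_mul_aux n l w w'

/-- The algebra hom from `R` to functions `V → R`. -/
def psi (n : ℕ) : AddMonoidAlgebra ℤ (Fin (n+1) → ℤ) →ₐ[ℤ] (Vt n → Rg n) :=
  AddMonoidAlgebra.lift ℤ (Vt n → Rg n) (Fin (n+1) → ℤ) (Fm n)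

lemma psi_single (n : ℕ) (w : Fin (n+1) → ℤ) (b : ℤ) :
    psi n (AddMonoidAlgebra.single w b) = b • Fm n (Multiplicative.ofAdd w) := by
  exact AddMonoidAlgebra.lift_single (Fm n) w b

lemma Fm_apply (n : ℕ) (w : Fin (n+1) → ℤ) (l : Vt n) :
    Fm n (Multiplicative.ofAdd w) l = AddMonoidAlgebra.single (Amap n l.1 w) 1 := rfl

lemma Fm_single_eq_Mv (n : ℕ) (k : Fin (n+1)) :
    Fm n (Multiplicative.ofAdd (Pi.single k 1)) = fun l : Vt n => Mv n ((k:ℕ)+2) l.1 := by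
  funext l
  rw [Fm_apply, Amap_single, Mv_eq_ex]
  rfl

lemma Fm_neg_single_eq_MvInv (n : ℕ) (k : Fin (n+1)) :
    Fm n (Multiplicative.ofAdd (-(Pi.single k 1))) = fun l : Vt n => MvInv n ((k:ℕ)+2) l.1 := by
  funext l
  rw [Fm_apply, Amap_neg_single, MvInv_eq_ex]
  rfl

/-- The generating set from the theorem statement. -/
def gens (n : ℕ) : Set (Vt n → Rg n) :=
  {f : Vt n → Rg n | ∃ i : ℕ, 2 ≤ i ∧ i ≤ n+2 ∧
    ((f = fun l => Mv n i l.1) ∨ (f = fun l => MvInv n i l.1))}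

lemma Fm_single_mem (n : ℕ) (k : Fin (n+1)) :
    Fm n (Multiplicative.ofAdd (Pi.single k 1)) ∈ Subring.closure (gens n) := by
  apply Subring.subset_closure
  refine ⟨(k:ℕ)+2, by omega, by omega, Or.inl ?_⟩
  exact Fm_single_eq_Mv n k

lemma Fm_neg_single_mem (n : ℕ) (k : Fin (n+1)) :
    Fm n (Multiplicative.ofAdd (-(Pi.single k 1))) ∈ Subring.closure (gens n) := by
  apply Subring.subset_closure
  refine ⟨(k:ℕ)+2, by omega, by omega, Or.inr ?_⟩
  exact Fm_neg_single_eq_MvInv n k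

lemma Fm_mem_aux (n : ℕ) (k : Fin (n+1)) (m : ℤ) :
    Fm n (Multiplicative.ofAdd (Pi.single k m)) ∈ Subring.closure (gens n) := by
  induction m using Int.induction_on with
  | zero => simp only [Pi.single_zero, ofAdd_zero, map_one]; exact Subring.one_mem _
  | succ m ih =>
      have : (Pi.single k (m+1 : ℤ) : Fin (n+1) → ℤ)
          = Pi.single k (m : ℤ) + Pi.single k 1 := by rw [← Pi.single_add]
      rw [this, ofAdd_add, map_mul]
      exact Subring.mul_mem _ ih (Fm_single_mem n k)
  | pred m ih =>
      have : (Pi.single k (-m-1 : ℤ) : Fin (n+1) → ℤ)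
          = Pi.single k (-m : ℤ) + (-(Pi.single k 1)) := by
        rw [← Pi.single_neg, ← Pi.single_add]; ring_nf
      rw [this, ofAdd_add, map_mul]
      exact Subring.mul_mem _ ih (Fm_neg_single_mem n k)

lemma Fm_mem (n : ℕ) (w : Fin (n+1) → ℤ) :
    Fm n (Multiplicative.ofAdd w) ∈ Subring.closure (gens n) := by
  have hw : w = ∑ k, Pi.single k (w k) := (Finset.univ_sum_single w).symm
  rw [hw]
  classical
  refine Finset.sum_induction _ (fun w => Fm n (Multiplicative.ofAdd w) ∈ Subring.closure (gens n))
    ?_ ?_ ?_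
  · intro a b ha hb
    rw [ofAdd_add, map_mul]; exact Subring.mul_mem _ ha hb
  · simp only [ofAdd_zero, map_one]; exact Subring.one_mem _
  · intro k _; exact Fm_mem_aux n k (w k)

lemma psi_mem (n : ℕ) (r : AddMonoidAlgebra ℤ (Fin (n+1) → ℤ)) :
    psi n r ∈ Subring.closure (gens n) := by
  induction r using AddMonoidAlgebra.induction_linear with
  | zero => rw [map_zero]; exact Subring.zero_mem _
  | add f g hf hg => rw [map_add]; exact Subring.add_mem _ hf hg
  | single a b =>
      rw [psi_single]
      exact Subring.zsmul_mem _ (Fm_mem n a) b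

lemma closure_le_range (n : ℕ) :
    Subring.closure (gens n) ≤ (psi n).toRingHom.range := by
  rw [Subring.closure_le]
  rintro f ⟨i, hi2, hin, hf⟩
  have hk : i - 2 < n + 1 := by omega
  set k : Fin (n+1) := ⟨i-2, hk⟩ with hkdef
  have hik : i = (k:ℕ) + 2 := by simp [hkdef]; omega
  rcases hf with hf | hf
  · refine ⟨AddMonoidAlgebra.single (Pi.single k 1) 1, ?_⟩
    show psi n _ = f
    rw [psi_single, one_smul, Fm_single_eq_Mv, hf, ← hik]
  · refine ⟨AddMonoidAlgebra.single (-(Pi.single k 1)) 1, ?_⟩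
    show psi n _ = f
    rw [psi_single, one_smul, Fm_neg_single_eq_MvInv, hf, ← hik]

/-- The distinguished vertex `1`. -/
def v1 (n : ℕ) : Vt n := ⟨1, ⟨le_refl 1, by omega⟩⟩

lemma cvec_one (n : ℕ) (hn : 1 ≤ n) (k : Fin (n+1)) :
    cvec n k 1 = Pi.single k 1 := by
  have hk := k.isLt
  unfold cvec bar
  rw [if_neg (by omega), if_neg (by omega)]
  unfold hh
  rw [if_pos (by omega), if_pos (by omega)]
  funext t
  have ht := t.isLt
  simp only [Pi.sub_apply, Pi.single_apply, ee, Fin.ext_iff]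
  have h1 : (k:ℕ) + 2 - 1 = (k:ℕ) + 1 := by omega
  have h2 : (1:ℕ) - 1 = 0 := rfl
  rw [h1, h2]
  split_ifs <;> first | omega | simp_all

lemma Amap_one (n : ℕ) (hn : 1 ≤ n) (w : Fin (n+1) → ℤ) :
    Amap n 1 w = w := by
  unfold Amap
  have : ∀ k : Fin (n+1), w k • cvec n k 1 = Pi.single k (w k) := by
    intro k
    rw [cvec_one n hn k]
    funext t
    simp [Pi.single_apply]
  simp only [this]
  exact Finset.univ_sum_single w

lemma eval_psi (n : ℕ) (hn : 1 ≤ n) (r : AddMonoidAlgebra ℤ (Fin (n+1) → ℤ)) :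
    psi n r (v1 n) = r := by
  induction r using AddMonoidAlgebra.induction_linear with
  | zero => rw [map_zero]; rfl
  | add f g hf hg => rw [map_add, Pi.add_apply, hf, hg]
  | single a b =>
      rw [psi_single]
      show b • (Fm n (Multiplicative.ofAdd a) (v1 n)) = _
      rw [Fm_apply]
      show b • AddMonoidAlgebra.single (Amap n 1 a) 1 = _
      rw [Amap_one n hn]
      rw [AddMonoidAlgebra.smul_single', mul_one]

/-- the evaluation at the vertex `1 ∈ V` is a ring isomorphism from the
subring of functions `V → R` generated by `{M_i, M_i⁻¹ : 2 ≤ i ≤ n+2}` onto `R`. -/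
theorem eval_one_bijective (n : ℕ) (hn : 1 ≤ n) :
    Function.Bijective
      ((Pi.evalRingHom (fun _ : Vt n => Rg n) (⟨1, ⟨le_refl 1, by omega⟩⟩ : Vt n)).comp
        (Subring.subtype (Subring.closure
          {f : Vt n → Rg n | ∃ i : ℕ, 2 ≤ i ∧ i ≤ n+2 ∧
            ((f = fun l => Mv n i l.1) ∨ (f = fun l => MvInv n i l.1))}))) :=  by
  have key : ∀ x : Vt n, x.1 = 1 → x = v1 n := fun x hx => Subtype.ext hx
  constructor
  · rintro ⟨x, hx⟩ ⟨y, hy⟩ hxy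
    obtain ⟨a, ha⟩ := closure_le_range n hx
    obtain ⟨b, hb⟩ := closure_le_range n hy
    have hxy' : x (v1 n) = y (v1 n) := hxy
    have hab : a = b := by
      have h1 : psi n a (v1 n) = a := eval_psi n hn a
      have h2 : psi n b (v1 n) = b := eval_psi n hn b
      rw [← h1, ← h2]
      have ha' : psi n a = x := ha
      have hb' : psi n b = y := hb
      rw [ha', hb', hxy']
    apply Subtype.ext
    show x = y
    have ha' : psi n a = x := ha
    have hb' : psi n b = y := hb
    rw [← ha', ← hb', hab]
  · intro r
    exact ⟨⟨psi n r, psi_mem n r⟩, eval_psi n hn r⟩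
end
end
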